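/- Suppose in an MDP with rewards in [0,1] and discount γ ∈ [0,1), an action a_w available in every state gives expected immediate reward 1, and every task action a gives expected immediate reward at most r_task < 1. Then for every state s and every task action a, Q*(s, a_w) - Q*(s, a) ≥ 1 - r_task > 0; in particular the optimal policy never takes a task action. -/
import Mathlib


/-- Wireheading dominance: in an MDP with rewards in [0,1], a wireheading action
with expected immediate reward 1 available in every state dominates every task
action (expected immediate reward ≤ rtask < 1) by at least 1 - rtask in optimal
Q-value; in particular the optimal policy never takes a task action. -/
theorem stmt2 {S A : Type*} [Nonempty S]
    (γ rtask : ℝ) (hγ0 : 0 ≤ γ) (hγ1 : γ < 1)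
    (hrt0 : 0 ≤ rtask) (hrt1 : rtask < 1)
    (r : S → A → ℝ) (hr : ∀ s a, 0 ≤ r s a ∧ r s a ≤ 1)
    -- expected value over the next-state distribution of s,a
    (Exp : S → A → (S → ℝ) → ℝ)
    (hExpMono : ∀ s a (f g : S → ℝ), (∀ s', f s' ≤ g s') → Exp s a f ≤ Exp s a g)
    (hExpConst : ∀ s a (c : ℝ), Exp s a (fun _ => c) = c)
    -- Bellman optimality equations
    (Q : S → A → ℝ) (V : S → ℝ)
    (hBellQ : ∀ s a, Q s a = r s a + γ * Exp s a V)
    (hBellV : ∀ s, IsLUB (Set.range (Q s)) (V s))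
    (hVbddAbove : BddAbove (Set.range V)) (hVbddBelow : BddBelow (Set.range V))
    (aw : A) (Atask : Set A)
    (hw : ∀ s, r s aw = 1)
    (ht : ∀ s, ∀ a ∈ Atask, r s a ≤ rtask) :
    ∀ s, ∀ a ∈ Atask, 1 - rtask ≤ Q s aw - Q s a ∧ Q s a < Q s aw := by

  -- Let m and M be the inf and sup of V.
  set m := sInf (Set.range V) with hm
  set M := sSup (Set.range V) with hM
  have hne : (Set.range V).Nonempty := Set.range_nonempty V
  have hmleV : ∀ s, m ≤ V s := fun s => csInf_le hVbddBelow ⟨s, rfl⟩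
  have hVleM : ∀ s, V s ≤ M := fun s => le_csSup hVbddAbove ⟨s, rfl⟩
  -- Lower bound: 1 + γ * m ≤ V s for all s.
  have hlow : ∀ s, 1 + γ * m ≤ V s := by
    intro s
    have h1 : Q s aw ≤ V s := (hBellV s).1 ⟨aw, rfl⟩
    have h2 : m ≤ Exp s aw V := by
      have := hExpMono s aw (fun _ => m) V (fun s' => hmleV s')
      rwa [hExpConst] at this
    have := hBellQ s aw
    rw [hw s] at this
    nlinarith
  have hmlb : 1 + γ * m ≤ m := le_csInf hne (by rintro x ⟨s, rfl⟩; exact hlow s)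
  -- Upper bound: V s ≤ 1 + γ * M for all s.
  have hhigh : ∀ s, V s ≤ 1 + γ * M := by
    intro s
    refine (hBellV s).2 ?_
    rintro x ⟨a, rfl⟩
    have h2 : Exp s a V ≤ M := by
      have := hExpMono s a V (fun _ => M) (fun s' => hVleM s')
      rwa [hExpConst] at this
    have := (hr s a).2
    rw [hBellQ s a]
    nlinarith
  have hMub : M ≤ 1 + γ * M := csSup_le hne (by rintro x ⟨s, rfl⟩; exact hhigh s)
  have hγpos : 0 < 1 - γ := by linarith
  have hmval : 1 / (1 - γ) ≤ m := by
    rw [div_le_iff₀ hγpos]; nlinarith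
  have hMval : M ≤ 1 / (1 - γ) := by
    rw [le_div_iff₀ hγpos]; nlinarith
  -- So V is constant equal to 1/(1-γ).
  have hVconst : ∀ s, V s = 1 / (1 - γ) := fun s =>
    le_antisymm (le_trans (hVleM s) hMval) (le_trans hmval (hmleV s))
  have hExpV : ∀ s a, Exp s a V = 1 / (1 - γ) := by
    intro s a
    have h1 : Exp s a V ≤ 1 / (1 - γ) := by
      have := hExpMono s a V (fun _ => 1 / (1 - γ)) (fun s' => (hVconst s').le)
      rwa [hExpConst] at this
    have h2 : 1 / (1 - γ) ≤ Exp s a V := by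
      have := hExpMono s a (fun _ => 1 / (1 - γ)) V (fun s' => (hVconst s').ge)
      rwa [hExpConst] at this
    linarith
  intro s a ha
  have hQw : Q s aw = 1 + γ * (1 / (1 - γ)) := by rw [hBellQ, hw, hExpV]
  have hQa : Q s a ≤ rtask + γ * (1 / (1 - γ)) := by
    rw [hBellQ, hExpV]; linarith [ht s a ha]
  constructor <;> linarith
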